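/- arXiv:2106.06271 — 2 statements merged into one kernel-verified Lean document; each statement's English description precedes it below -/
import Mathlib

section
/- Pointwise convergence of the truncated effective-noise recursion: suppose that for every m ≥ 0, every k = 1,…,v and every j = 1,…,d the functions x ↦ u⁽ᵏ⁾(x, tₘ) and x ↦ G⁽ᵏʲ⁾(x, tₘ) are real-analytic on ℝᵛ with multi-index Taylor series at every point converging absolutely on all of ℝᵛ, and suppose there are finite constants A⁽ʲ⁾ₘ with |ΔW⁽ʲ⁾ₘ(ω)| ≤ A⁽ʲ⁾ₘ for all m, j and all ω ∈ Ω. Then for every n ≥ 1 and every ω ∈ Ω, the truncated effective noise converges to the exact effective noise: lim_{N→∞} ΔŴₙ,₍N₎(ω) = ΔŴₙ(ω). -/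
open MeasureTheory Finset Filter

/-- Partial derivative of `f : ℝᵛ → ℝ` in the `k`-th coordinate direction. -/
noncomputable def pd1 {v : ℕ} (k : Fin v) (f : (Fin v → ℝ) → ℝ) : (Fin v → ℝ) → ℝ :=
  fun x => deriv (fun s => f (Function.update x k s)) (x k)

/-- Mixed partial derivative `∂ʳ f` associated with the multi-index `r`. -/
noncomputable def mpd {v : ℕ} (r : Fin v → ℕ) (f : (Fin v → ℝ) → ℝ) : (Fin v → ℝ) → ℝ :=
  ((List.ofFn fun k : Fin v => (pd1 k)^[r k]).foldr (· ∘ ·) id) f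

/-- The finset of `v`-dimensional multi-indices with every component `≤ N`
(it contains all multi-indices `r` with `|r| ≤ N`). -/
def midx (v N : ℕ) : Finset (Fin v → ℕ) := Fintype.piFinset fun _ => Finset.range (N + 1)

lemma key_tendsto {v : ℕ} (a : (Fin v → ℕ) → ℝ) (yN : ℕ → Fin v → ℝ) (Y : Fin v → ℝ)
    (hy : ∀ l, Filter.Tendsto (fun N => yN N l) Filter.atTop (nhds (Y l)))
    (habs : ∀ c : Fin v → ℝ, Summable (fun r : Fin v → ℕ => a r * ∏ l, c l ^ r l))
    (F : ℕ → Finset (Fin v → ℕ))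
    (hF : ∀ r, a r ≠ 0 → ∀ᶠ N in Filter.atTop, r ∈ F N) :
    Filter.Tendsto (fun N => ∑ r ∈ F N, a r * ∏ l, yN N l ^ r l) Filter.atTop
      (nhds (∑' r : Fin v → ℕ, a r * ∏ l, Y l ^ r l)) := by
  set M : Fin v → ℝ := fun l => |Y l| + 1 with hM
  have hMpos : ∀ l, 0 ≤ M l := fun l => by positivity
  have hbound : Summable (fun r : Fin v → ℕ => |a r * ∏ l, M l ^ r l|) :=
    (habs M).abs
  set fN : ℕ → (Fin v → ℕ) → ℝ :=
    fun N r => if r ∈ F N then a r * ∏ l, yN N l ^ r l else 0 with hfN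
  have hsum_eq : ∀ N, ∑ r ∈ F N, a r * ∏ l, yN N l ^ r l = ∑' r, fN N r := by
    intro N
    rw [tsum_eq_sum (s := F N) (fun r hr => if_neg hr)]
    exact Finset.sum_congr rfl fun r hr => (if_pos hr).symm
  have hpt : ∀ r, Filter.Tendsto (fun N => fN N r) Filter.atTop
      (nhds (a r * ∏ l, Y l ^ r l)) := by
    intro r
    by_cases ha : a r = 0
    · rw [ha, zero_mul]
      simp only [hfN, ha, zero_mul, ite_self]
      exact tendsto_const_nhds
    · have hev := hF r ha
      have hprod : Filter.Tendsto (fun N => a r * ∏ l, yN N l ^ r l) Filter.atTop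
          (nhds (a r * ∏ l, Y l ^ r l)) :=
        Filter.Tendsto.const_mul _ (tendsto_finset_prod _ fun l _ => ((hy l).pow (r l)))
      refine hprod.congr' ?_
      filter_upwards [hev] with N hN
      simp [hfN, hN]
  have hev_bd : ∀ᶠ N in Filter.atTop, ∀ r, ‖fN N r‖ ≤ |a r * ∏ l, M l ^ r l| := by
    have h1 : ∀ᶠ N in Filter.atTop, ∀ l, |yN N l| ≤ M l := by
      rw [Filter.eventually_all]
      intro l
      exact ((hy l).abs).eventually (eventually_le_nhds (lt_add_one _))
    filter_upwards [h1] with N hN r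
    have hle : ‖fN N r‖ ≤ |a r| * ∏ l, M l ^ r l := by
      by_cases hr : r ∈ F N
      · simp only [hfN, if_pos hr, Real.norm_eq_abs, abs_mul]
        gcongr
        rw [abs_prod]
        refine Finset.prod_le_prod (fun l _ => abs_nonneg _) (fun l _ => ?_)
        rw [abs_pow]
        exact pow_le_pow_left₀ (abs_nonneg _) (hN l) _
      · simp only [hfN, if_neg hr, norm_zero]
        positivity
    refine hle.trans (le_of_eq ?_)
    rw [abs_mul, abs_prod]
    exact congrArg _ (Finset.prod_congr rfl fun l _ => (abs_of_nonneg (by positivity)).symm)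
  have := tendsto_tsum_of_dominated_convergence hbound hpt hev_bd
  exact Filter.Tendsto.congr (fun N => (hsum_eq N).symm) this

lemma mpd_zero {v : ℕ} (f : (Fin v → ℝ) → ℝ) : mpd (fun _ => 0) f = f := by
  have key : ∀ (L : List (((Fin v → ℝ) → ℝ) → ((Fin v → ℝ) → ℝ))), (∀ g ∈ L, g = id) →
      L.foldr (· ∘ ·) id = id := by
    intro L
    induction L with
    | nil => intro _; rfl
    | cons a t ih =>
      intro hL
      rw [List.foldr_cons, hL a (List.mem_cons_self),
        ih (fun g hg => hL g (List.mem_cons_of_mem a hg))]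
      rfl
  unfold mpd
  rw [key]
  · rfl
  · intro g hg
    rw [List.mem_ofFn] at hg
    obtain ⟨k, hk⟩ := hg
    rw [← hk]
    rfl

/-- **Pointwise convergence of the truncated effective-noise recursion.**  If the drift and
diffusion coefficients are real-analytic in the state variable, with multi-index Taylor series
at every point converging absolutely on all of `ℝᵛ`, and the noise increments are uniformly
bounded, then for every `n ≥ 1` and every `ω` the order-`N` truncated effective noise
converges, as `N → ∞`, to the exact effective noise. -/
theorem truncated_effective_noise_pointwise_convergence
    (v d : ℕ) (hv : 1 ≤ v) (hd : 1 ≤ d)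
    (h : ℝ) (hh : 0 < h) (t0 : ℝ) (x0 : Fin v → ℝ)
    (u : (Fin v → ℝ) → ℝ → (Fin v → ℝ))
    (G : (Fin v → ℝ) → ℝ → Matrix (Fin v) (Fin d) ℝ)
    {Ω : Type*} [MeasurableSpace Ω] (P : Measure Ω) [IsProbabilityMeasure P]
    (dW : ℕ → Ω → (Fin d → ℝ))
    (Xhat : ℕ → Ω → (Fin v → ℝ)) (xc : ℕ → (Fin v → ℝ))
    (hX0 : ∀ ω, Xhat 0 ω = x0)
    (hX : ∀ (n : ℕ) (ω : Ω), Xhat (n + 1) ω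
        = Xhat n ω + h • u (Xhat n ω) (t0 + n * h)
          + (G (Xhat n ω) (t0 + n * h)).mulVec (dW (n + 1) ω))
    (hxc0 : xc 0 = x0)
    (hxc : ∀ n : ℕ, xc (n + 1) = xc n + h • u (xc n) (t0 + n * h))
    (DW : ℕ → Ω → (Fin v → ℝ))
    (hDW : ∀ (n : ℕ) (ω : Ω), DW n ω = Xhat n ω - xc n)
    (DWt : ℕ → ℕ → Ω → (Fin v → ℝ))
    (hDWt0 : ∀ (N : ℕ) (ω : Ω), DWt N 0 ω = 0)
    (hDWt : ∀ N : ℕ, 1 ≤ N → ∀ (n : ℕ) (ω : Ω) (k : Fin v), DWt N (n + 1) ω k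
      = DWt N n ω k
        + h * ∑ r ∈ (midx v N).filter (fun r => 1 ≤ ∑ l, r l ∧ ∑ l, r l ≤ N),
            (1 / ((∏ l, Nat.factorial (r l) : ℕ) : ℝ))
              * mpd r (fun x => u x (t0 + n * h) k) (xc n) * ∏ l, (DWt N n ω l) ^ (r l)
        + ∑ r ∈ (midx v N).filter (fun r => (∑ l, r l) + 1 ≤ N),
            ∑ j : Fin d,
              (1 / ((∏ l, Nat.factorial (r l) : ℕ) : ℝ))
                * mpd r (fun x => G x (t0 + n * h) k j) (xc n)
                * dW (n + 1) ω j * ∏ l, (DWt N n ω l) ^ (r l))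
    (hUanalytic : ∀ (m : ℕ) (k : Fin v) (c y : Fin v → ℝ), HasSum
      (fun r : Fin v → ℕ =>
        (1 / ((∏ l, Nat.factorial (r l) : ℕ) : ℝ))
          * mpd r (fun x => u x (t0 + m * h) k) c * ∏ l, (y l) ^ (r l))
      (u (c + y) (t0 + m * h) k))
    (hGanalytic : ∀ (m : ℕ) (k : Fin v) (j : Fin d) (c y : Fin v → ℝ), HasSum
      (fun r : Fin v → ℕ =>
        (1 / ((∏ l, Nat.factorial (r l) : ℕ) : ℝ))
          * mpd r (fun x => G x (t0 + m * h) k j) c * ∏ l, (y l) ^ (r l))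
      (G (c + y) (t0 + m * h) k j))
    (A : ℕ → Fin d → ℝ)
    (hA : ∀ (m : ℕ) (j : Fin d) (ω : Ω), |dW m ω j| ≤ A m j) :
    ∀ (n : ℕ), 1 ≤ n → ∀ ω : Ω,
      Filter.Tendsto (fun N : ℕ => DWt N n ω) Filter.atTop (nhds (DW n ω)) := by
  intro n hn ω
  clear hn
  induction n with
  | zero =>
    have h0 : DW 0 ω = 0 := by rw [hDW, hX0, hxc0, sub_self]
    rw [h0]
    exact tendsto_const_nhds.congr fun N => (hDWt0 N ω).symm
  | succ n ih =>
    rw [tendsto_pi_nhds]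
    intro k
    have ihk : ∀ l, Tendsto (fun N => DWt N n ω l) atTop (nhds (DW n ω l)) :=
      fun l => tendsto_pi_nhds.mp ih l
    have hXcY : Xhat n ω = xc n + DW n ω := by rw [hDW]; abel
    -- drift part
    set b1 : (Fin v → ℕ) → ℝ := fun r =>
      (1 / ((∏ l, Nat.factorial (r l) : ℕ) : ℝ))
        * mpd r (fun x => u x (t0 + n * h) k) (xc n) with hb1
    classical
    set a1 : (Fin v → ℕ) → ℝ := Function.update b1 (fun _ => 0) 0 with ha1
    have hupd : ∀ c' : Fin v → ℝ,
        Function.update (fun r : Fin v → ℕ => b1 r * ∏ l, c' l ^ r l) (fun _ => 0) 0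
          = fun r => a1 r * ∏ l, c' l ^ r l := by
      intro c'
      funext r
      by_cases hr : r = fun _ => 0
      · subst hr
        simp [ha1]
      · rw [Function.update_of_ne hr, ha1, Function.update_of_ne hr]
    have habs1 : ∀ c' : Fin v → ℝ, Summable (fun r : Fin v → ℕ => a1 r * ∏ l, c' l ^ r l) := by
      intro c'
      have hs : Summable (fun r : Fin v → ℕ => b1 r * ∏ l, c' l ^ r l) :=
        (hUanalytic n k (xc n) c').summable
      have := hs.update (fun _ => 0) 0
      rwa [hupd c'] at this
    set F1 : ℕ → Finset (Fin v → ℕ) := fun N =>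
      (midx v N).filter (fun r => 1 ≤ ∑ l, r l ∧ ∑ l, r l ≤ N) with hF1def
    have hF1 : ∀ r, a1 r ≠ 0 → ∀ᶠ N in atTop, r ∈ F1 N := by
      intro r hr
      have hr0 : r ≠ fun _ => 0 := by
        rintro rfl
        simp [ha1] at hr
      have hpos : 1 ≤ ∑ l, r l := by
        rcases Nat.eq_zero_or_pos (∑ l, r l) with h0 | h0
        · exact absurd (funext fun l =>
            (Finset.sum_eq_zero_iff.mp h0) l (Finset.mem_univ l)) hr0
        · exact h0
      filter_upwards [eventually_ge_atTop (∑ l, r l)] with N hN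
      rw [hF1def, Finset.mem_filter]
      refine ⟨?_, hpos, hN⟩
      rw [midx, Fintype.mem_piFinset]
      intro l
      rw [Finset.mem_range]
      have hle : r l ≤ ∑ l, r l :=
        Finset.single_le_sum (fun _ _ => Nat.zero_le _) (Finset.mem_univ l)
      omega
    have hT1 := key_tendsto a1 (fun N => DWt N n ω) (DW n ω) ihk habs1 F1 hF1
    have hts1 : ∑' r : Fin v → ℕ, a1 r * ∏ l, DW n ω l ^ r l
        = u (xc n + DW n ω) (t0 + n * h) k - u (xc n) (t0 + n * h) k := by
      have hs := hUanalytic n k (xc n) (DW n ω)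
      have h2 := hs.update (fun _ => 0) 0
      rw [hupd (DW n ω)] at h2
      rw [h2.tsum_eq]
      have hmz : mpd (fun _ : Fin v => (0:ℕ)) (fun x => u x (t0 + n * h) k) (xc n)
          = u (xc n) (t0 + n * h) k := by rw [mpd_zero]
      simp only [hmz, Nat.factorial_zero, Finset.prod_const_one, Nat.cast_one,
        pow_zero, one_div, inv_one, one_mul, mul_one]
      ring
    rw [hts1] at hT1
    -- diffusion part
    set a2 : Fin d → (Fin v → ℕ) → ℝ := fun j r =>
      (1 / ((∏ l, Nat.factorial (r l) : ℕ) : ℝ))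
        * mpd r (fun x => G x (t0 + n * h) k j) (xc n) * dW (n + 1) ω j with ha2
    set F2 : ℕ → Finset (Fin v → ℕ) := fun N =>
      (midx v N).filter (fun r => (∑ l, r l) + 1 ≤ N) with hF2def
    have habs2 : ∀ j (c' : Fin v → ℝ),
        Summable (fun r : Fin v → ℕ => a2 j r * ∏ l, c' l ^ r l) := by
      intro j c'
      refine ((hGanalytic n k j (xc n) c').summable.mul_right (dW (n + 1) ω j)).congr ?_
      intro r
      simp only [ha2]
      ring
    have hF2 : ∀ r : Fin v → ℕ, ∀ᶠ N in atTop, r ∈ F2 N := by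
      intro r
      filter_upwards [eventually_ge_atTop ((∑ l, r l) + 1)] with N hN
      rw [hF2def, Finset.mem_filter]
      refine ⟨?_, hN⟩
      rw [midx, Fintype.mem_piFinset]
      intro l
      rw [Finset.mem_range]
      have hle : r l ≤ ∑ l, r l :=
        Finset.single_le_sum (fun _ _ => Nat.zero_le _) (Finset.mem_univ l)
      omega
    have hT2 : ∀ j : Fin d, Tendsto
        (fun N => ∑ r ∈ F2 N, a2 j r * ∏ l, DWt N n ω l ^ r l) atTop
        (nhds (G (xc n + DW n ω) (t0 + n * h) k j * dW (n + 1) ω j)) := by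
      intro j
      have hraw := key_tendsto (a2 j) (fun N => DWt N n ω) (DW n ω) ihk (habs2 j) F2
        (fun r _ => hF2 r)
      have hts2 : ∑' r : Fin v → ℕ, a2 j r * ∏ l, DW n ω l ^ r l
          = G (xc n + DW n ω) (t0 + n * h) k j * dW (n + 1) ω j := by
        have hs := (hGanalytic n k j (xc n) (DW n ω)).mul_right (dW (n + 1) ω j)
        rw [← hs.tsum_eq]
        refine tsum_congr fun r => ?_
        simp only [ha2]
        ring
      rwa [hts2] at hraw
    -- combine
    have hfinal : Tendsto (fun N =>
        DWt N n ω k + h * (∑ r ∈ F1 N, a1 r * ∏ l, DWt N n ω l ^ r l)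
          + ∑ j : Fin d, ∑ r ∈ F2 N, a2 j r * ∏ l, DWt N n ω l ^ r l) atTop
        (nhds (DW n ω k
          + h * (u (xc n + DW n ω) (t0 + n * h) k - u (xc n) (t0 + n * h) k)
          + ∑ j : Fin d, G (xc n + DW n ω) (t0 + n * h) k j * dW (n + 1) ω j)) :=
      ((ihk k).add (hT1.const_mul h)).add (tendsto_finset_sum _ fun j _ => hT2 j)
    have hval : DW n ω k
        + h * (u (xc n + DW n ω) (t0 + n * h) k - u (xc n) (t0 + n * h) k)
        + ∑ j : Fin d, G (xc n + DW n ω) (t0 + n * h) k j * dW (n + 1) ω j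
        = DW (n + 1) ω k := by
      rw [hDW (n + 1) ω, hX n ω, hxc n, ← hXcY]
      have hDWk : DW n ω k = Xhat n ω k - xc n k := by rw [hDW]; rfl
      simp only [Pi.sub_apply, Pi.add_apply, Pi.smul_apply, smul_eq_mul,
        Matrix.mulVec, dotProduct]
      rw [hDWk]
      ring
    rw [hval] at hfinal
    refine Tendsto.congr' ?_ hfinal
    filter_upwards [eventually_ge_atTop 1] with N hN
    rw [hDWt N hN n ω k]
    have e1 : ∑ r ∈ F1 N, a1 r * ∏ l, DWt N n ω l ^ r l
        = ∑ r ∈ F1 N,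
            (1 / ((∏ l, Nat.factorial (r l) : ℕ) : ℝ))
              * mpd r (fun x => u x (t0 + n * h) k) (xc n) * ∏ l, DWt N n ω l ^ r l := by
      refine Finset.sum_congr rfl fun r hr => ?_
      rw [hF1def, Finset.mem_filter] at hr
      have hr0 : r ≠ fun _ => 0 := by
        intro hzero
        have := hr.2.1
        rw [hzero] at this
        simp at this
      rw [ha1, Function.update_of_ne hr0]
    have e2 : ∑ j : Fin d, ∑ r ∈ F2 N, a2 j r * ∏ l, DWt N n ω l ^ r l
        = ∑ r ∈ F2 N, ∑ j : Fin d,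
            (1 / ((∏ l, Nat.factorial (r l) : ℕ) : ℝ))
              * mpd r (fun x => G x (t0 + n * h) k j) (xc n)
              * dW (n + 1) ω j * ∏ l, DWt N n ω l ^ r l := by
      rw [Finset.sum_comm]
    rw [e1, e2]
end

section
/- Convergence of the moments of the truncated effective noise (convergence part of Theorem 3.4): suppose that for every m ≥ 0, every k = 1,…,v and every j = 1,…,d the functions x ↦ u⁽ᵏ⁾(x, tₘ) and x ↦ G⁽ᵏʲ⁾(x, tₘ) are real-analytic on ℝᵛ with multi-index Taylor series at every point converging absolutely on all of ℝᵛ, and suppose there are finite constants A⁽ʲ⁾ₘ with |ΔW⁽ʲ⁾ₘ(ω)| ≤ A⁽ʲ⁾ₘ for all m, j and all ω ∈ Ω. Then for every n ≥ 1 and every v-dimensional multi-index r, lim_{N→∞} E[(ΔŴₙ,₍N₎)ʳ] = E[(ΔŴₙ)ʳ]. -/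
open MeasureTheory Finset Filter

lemma foldr_comp_id {α : Type*} : ∀ (L : List (α → α)), (∀ g ∈ L, g = id) →
    L.foldr (· ∘ ·) id = id := by
  intro L
  induction L with
  | nil => intro _; rfl
  | cons a L ih =>
    intro hL
    simp only [List.foldr_cons, hL a (by simp), ih (fun g hg => hL g (by simp [hg]))]
    rfl

lemma mpd_zero_s7 {v : ℕ} (r : Fin v → ℕ) (hr : ∀ l, r l = 0) (f : (Fin v → ℝ) → ℝ) :
    mpd r f = f := by
  unfold mpd
  rw [foldr_comp_id]
  · rfl
  · intro g hg
    simp only [List.mem_ofFn] at hg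
    obtain ⟨k, rfl⟩ := hg
    simp only [hr k]
    rfl

/-- Key convergence lemma: partial sums over growing finsets of a power series,
with moving argument, converge (Tannery / dominated convergence for sums). -/
lemma key_tendsto_s7 {v : ℕ} (a : (Fin v → ℕ) → ℝ) (B : ℝ) (hB : 0 ≤ B)
    (hsum : Summable (fun r : Fin v → ℕ => a r * ∏ l, B ^ r l))
    (yN : ℕ → Fin v → ℝ) (y : Fin v → ℝ)
    (hy : ∀ l, Tendsto (fun N => yN N l) atTop (nhds (y l)))
    (hbd : ∀ᶠ N in atTop, ∀ l, |yN N l| ≤ B)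
    (s : ℕ → Finset (Fin v → ℕ)) (pr : (Fin v → ℕ) → Prop) [DecidablePred pr]
    (hs : ∀ r, pr r → ∀ᶠ N in atTop, r ∈ s N)
    (hs' : ∀ N, ∀ r ∈ s N, pr r) :
    Tendsto (fun N => ∑ r ∈ s N, a r * ∏ l, yN N l ^ r l) atTop
      (nhds (∑' r, if pr r then a r * ∏ l, y l ^ r l else 0)) := by
  have habs : Summable (fun r : Fin v → ℕ => |a r| * ∏ l, B ^ r l) := by
    have h1 := hsum.abs
    refine h1.congr fun r => ?_
    rw [abs_mul, abs_of_nonneg (Finset.prod_nonneg fun l _ => pow_nonneg hB _)]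
  have heq : ∀ N, ∑ r ∈ s N, a r * ∏ l, yN N l ^ r l
      = ∑' r, (if r ∈ s N then a r * ∏ l, yN N l ^ r l else 0) := by
    intro N
    rw [eq_comm]
    exact (tsum_eq_sum fun r hr => if_neg hr).trans
      (Finset.sum_congr rfl fun r hr => if_pos hr)
  rw [funext heq]
  apply tendsto_tsum_of_dominated_convergence habs
  · intro r
    by_cases hpr : pr r
    · have hlim : Tendsto (fun N => a r * ∏ l, yN N l ^ r l) atTop
          (nhds (a r * ∏ l, y l ^ r l)) :=
        tendsto_const_nhds.mul (tendsto_finset_prod _ fun l _ => (hy l).pow (r l))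
      rw [if_pos hpr]
      refine Tendsto.congr' ?_ hlim
      filter_upwards [hs r hpr] with N hN
      rw [if_pos hN]
    · rw [if_neg hpr]
      have : ∀ N, (if r ∈ s N then a r * ∏ l, yN N l ^ r l else 0) = 0 := by
        intro N
        rw [if_neg (fun hmem => hpr (hs' N r hmem))]
      simp only [this]
      exact tendsto_const_nhds
  · filter_upwards [hbd] with N hN r
    rw [Real.norm_eq_abs]
    by_cases hmem : r ∈ s N
    · rw [if_pos hmem, abs_mul, Finset.abs_prod]
      refine mul_le_mul_of_nonneg_left ?_ (abs_nonneg _)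
      refine Finset.prod_le_prod (fun l _ => abs_nonneg _) fun l _ => ?_
      rw [abs_pow]
      exact pow_le_pow_left₀ (abs_nonneg _) (hN l) _
    · rw [if_neg hmem, abs_zero]
      positivity

/-- Bound for a partial sum of a power series evaluated inside the polydisc. -/
lemma abs_sum_le_tsum_coeff {v : ℕ} (c : (Fin v → ℕ) → ℝ) (B : ℝ) (hB : 0 ≤ B)
    (habs : Summable fun r : Fin v → ℕ => |c r| * ∏ l, B ^ r l)
    (y : Fin v → ℝ) (hy : ∀ l, |y l| ≤ B) (F : Finset (Fin v → ℕ)) :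
    |∑ r ∈ F, c r * ∏ l, y l ^ r l| ≤ ∑' r : Fin v → ℕ, |c r| * ∏ l, B ^ r l := by
  calc |∑ r ∈ F, c r * ∏ l, y l ^ r l| ≤ ∑ r ∈ F, |c r * ∏ l, y l ^ r l| :=
        Finset.abs_sum_le_sum_abs _ _
    _ ≤ ∑ r ∈ F, |c r| * ∏ l, B ^ r l := by
        refine Finset.sum_le_sum fun r _ => ?_
        rw [abs_mul, Finset.abs_prod]
        refine mul_le_mul_of_nonneg_left ?_ (abs_nonneg _)
        refine Finset.prod_le_prod (fun l _ => abs_nonneg _) fun l _ => ?_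
        rw [abs_pow]
        exact pow_le_pow_left₀ (abs_nonneg _) (hy l) _
    _ ≤ ∑' r : Fin v → ℕ, |c r| * ∏ l, B ^ r l := by
        refine Summable.sum_le_tsum F (fun r _ => ?_) habs
        have : (0:ℝ) ≤ ∏ l, B ^ r l := Finset.prod_nonneg fun l _ => pow_nonneg hB _
        positivity


/-- **Convergence of the moments of the truncated effective noise
(convergence part of Theorem 3.4).**  Under global analyticity of the coefficients and uniform
boundedness of the noise increments, for every `n ≥ 1` and every multi-index `r`,
`E[(ΔŴₙ,₍N₎)ʳ] → E[(ΔŴₙ)ʳ]` as `N → ∞`. -/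
theorem truncated_effective_noise_moment_convergence
    (v d : ℕ) (hv : 1 ≤ v) (hd : 1 ≤ d)
    (h : ℝ) (hh : 0 < h) (t0 : ℝ) (x0 : Fin v → ℝ)
    (u : (Fin v → ℝ) → ℝ → (Fin v → ℝ))
    (G : (Fin v → ℝ) → ℝ → Matrix (Fin v) (Fin d) ℝ)
    {Ω : Type*} [MeasurableSpace Ω] (P : Measure Ω) [IsProbabilityMeasure P]
    (dW : ℕ → Ω → (Fin d → ℝ))
    (Xhat : ℕ → Ω → (Fin v → ℝ)) (xc : ℕ → (Fin v → ℝ))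
    (hX0 : ∀ ω, Xhat 0 ω = x0)
    (hX : ∀ (n : ℕ) (ω : Ω), Xhat (n + 1) ω
        = Xhat n ω + h • u (Xhat n ω) (t0 + n * h)
          + (G (Xhat n ω) (t0 + n * h)).mulVec (dW (n + 1) ω))
    (hxc0 : xc 0 = x0)
    (hxc : ∀ n : ℕ, xc (n + 1) = xc n + h • u (xc n) (t0 + n * h))
    (DW : ℕ → Ω → (Fin v → ℝ))
    (hDW : ∀ (n : ℕ) (ω : Ω), DW n ω = Xhat n ω - xc n)
    (DWt : ℕ → ℕ → Ω → (Fin v → ℝ))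
    (hDWt0 : ∀ (N : ℕ) (ω : Ω), DWt N 0 ω = 0)
    (hDWt : ∀ N : ℕ, 1 ≤ N → ∀ (n : ℕ) (ω : Ω) (k : Fin v), DWt N (n + 1) ω k
      = DWt N n ω k
        + h * ∑ r ∈ (midx v N).filter (fun r => 1 ≤ ∑ l, r l ∧ ∑ l, r l ≤ N),
            (1 / ((∏ l, Nat.factorial (r l) : ℕ) : ℝ))
              * mpd r (fun x => u x (t0 + n * h) k) (xc n) * ∏ l, (DWt N n ω l) ^ (r l)
        + ∑ r ∈ (midx v N).filter (fun r => (∑ l, r l) + 1 ≤ N),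
            ∑ j : Fin d,
              (1 / ((∏ l, Nat.factorial (r l) : ℕ) : ℝ))
                * mpd r (fun x => G x (t0 + n * h) k j) (xc n)
                * dW (n + 1) ω j * ∏ l, (DWt N n ω l) ^ (r l))
    (hUanalytic : ∀ (m : ℕ) (k : Fin v) (c y : Fin v → ℝ), HasSum
      (fun r : Fin v → ℕ =>
        (1 / ((∏ l, Nat.factorial (r l) : ℕ) : ℝ))
          * mpd r (fun x => u x (t0 + m * h) k) c * ∏ l, (y l) ^ (r l))
      (u (c + y) (t0 + m * h) k))
    (hGanalytic : ∀ (m : ℕ) (k : Fin v) (j : Fin d) (c y : Fin v → ℝ), HasSum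
      (fun r : Fin v → ℕ =>
        (1 / ((∏ l, Nat.factorial (r l) : ℕ) : ℝ))
          * mpd r (fun x => G x (t0 + m * h) k j) c * ∏ l, (y l) ^ (r l))
      (G (c + y) (t0 + m * h) k j))
    (A : ℕ → Fin d → ℝ)
    (hA : ∀ (m : ℕ) (j : Fin d) (ω : Ω), |dW m ω j| ≤ A m j)
    (hmeas : ∀ m : ℕ, Measurable (dW m)) :
    ∀ (n : ℕ), 1 ≤ n → ∀ r : Fin v → ℕ,
      Filter.Tendsto (fun N : ℕ => ∫ ω, ∏ k, (DWt N n ω k) ^ (r k) ∂P)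
        Filter.atTop (nhds (∫ ω, ∏ k, (DW n ω k) ^ (r k) ∂P)) := by
  -- `Xhat` in terms of `DW`
  have hXeq : ∀ (n : ℕ) (ω : Ω), Xhat n ω = xc n + DW n ω := by
    intro n ω
    rw [hDW]
    abel
  -- exact recursion for the effective noise
  have hDWrec : ∀ (n : ℕ) (ω : Ω) (k : Fin v),
      DW (n + 1) ω k = DW n ω k
        + h * (u (xc n + DW n ω) (t0 + n * h) k - u (xc n) (t0 + n * h) k)
        + ∑ j, G (xc n + DW n ω) (t0 + n * h) k j * dW (n + 1) ω j := by
    intro n ω k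
    have h1 : DW (n + 1) ω = Xhat (n + 1) ω - xc (n + 1) := hDW _ _
    rw [hX n ω, hxc n, hXeq n ω] at h1
    rw [h1]
    simp only [Pi.sub_apply, Pi.add_apply, Pi.smul_apply, smul_eq_mul, Matrix.mulVec,
      dotProduct]
    ring
  -- measurability of the truncated effective noise
  have measDWt : ∀ N, 1 ≤ N → ∀ (n : ℕ) (k : Fin v), Measurable (fun ω => DWt N n ω k) := by
    intro N hN n
    induction n with
    | zero =>
      intro k
      simp only [hDWt0]
      exact measurable_const
    | succ n ihn =>
      intro k
      have hfun : (fun ω => DWt N (n + 1) ω k) = fun ω =>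
          DWt N n ω k
          + h * ∑ r ∈ (midx v N).filter (fun r => 1 ≤ ∑ l, r l ∧ ∑ l, r l ≤ N),
              (1 / ((∏ l, Nat.factorial (r l) : ℕ) : ℝ))
                * mpd r (fun x => u x (t0 + n * h) k) (xc n) * ∏ l, (DWt N n ω l) ^ (r l)
          + ∑ r ∈ (midx v N).filter (fun r => (∑ l, r l) + 1 ≤ N),
              ∑ j : Fin d,
                (1 / ((∏ l, Nat.factorial (r l) : ℕ) : ℝ))
                  * mpd r (fun x => G x (t0 + n * h) k j) (xc n)
                  * dW (n + 1) ω j * ∏ l, (DWt N n ω l) ^ (r l) :=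
        funext fun ω => hDWt N hN n ω k
      rw [hfun]
      refine Measurable.add (Measurable.add (ihn k) (Measurable.const_mul ?_ h)) ?_
      · refine Finset.measurable_sum _ fun r _ => ?_
        exact (Finset.measurable_prod _ fun l _ => (ihn l).pow_const _).const_mul _
      · refine Finset.measurable_sum _ fun r _ => Finset.measurable_sum _ fun j _ => ?_
        refine Measurable.mul ?_ (Finset.measurable_prod _ fun l _ => (ihn l).pow_const _)
        exact ((measurable_pi_apply j).comp (hmeas (n + 1))).const_mul _
  -- main induction: uniform boundedness and pointwise convergence
  have main : ∀ n : ℕ, ∃ B : ℝ, 0 ≤ B ∧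
      (∀ N, 1 ≤ N → ∀ (ω : Ω) (l : Fin v), |DWt N n ω l| ≤ B) ∧
      (∀ (ω : Ω) (l : Fin v),
        Tendsto (fun N => DWt N n ω l) atTop (nhds (DW n ω l))) := by
    intro n
    induction n with
    | zero =>
      refine ⟨0, le_refl _, ?_, ?_⟩
      · intro N _ ω l
        simp [hDWt0]
      · intro ω l
        have h0 : DW 0 ω l = 0 := by simp [hDW, hX0, hxc0]
        rw [h0]
        have h1 : (fun N => DWt N 0 ω l) = fun _ => (0:ℝ) := by
          funext N
          simp [hDWt0]
        rw [h1]
        exact tendsto_const_nhds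
    | succ n ih =>
      obtain ⟨B, hB0, hBbd, hconv⟩ := ih
      -- summability of absolute coefficient series at the polyradius B
      have hUabs : ∀ k : Fin v, Summable (fun r : Fin v → ℕ =>
          |(1 / ((∏ l, Nat.factorial (r l) : ℕ) : ℝ))
            * mpd r (fun x => u x (t0 + n * h) k) (xc n)| * ∏ l, B ^ r l) := by
        intro k
        have h1 : Summable (fun r : Fin v → ℕ =>
            (1 / ((∏ l, Nat.factorial (r l) : ℕ) : ℝ))
              * mpd r (fun x => u x (t0 + n * h) k) (xc n) * ∏ l, B ^ r l) := by
          simpa using (hUanalytic n k (xc n) (fun _ => B)).summable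
        refine h1.abs.congr fun r => ?_
        rw [abs_mul, abs_of_nonneg (Finset.prod_nonneg fun l _ => pow_nonneg hB0 _)]
      have hGabs : ∀ (k : Fin v) (j : Fin d), Summable (fun r : Fin v → ℕ =>
          |(1 / ((∏ l, Nat.factorial (r l) : ℕ) : ℝ))
            * mpd r (fun x => G x (t0 + n * h) k j) (xc n)| * ∏ l, B ^ r l) := by
        intro k j
        have h1 : Summable (fun r : Fin v → ℕ =>
            (1 / ((∏ l, Nat.factorial (r l) : ℕ) : ℝ))
              * mpd r (fun x => G x (t0 + n * h) k j) (xc n) * ∏ l, B ^ r l) := by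
          simpa using (hGanalytic n k j (xc n) (fun _ => B)).summable
        refine h1.abs.congr fun r => ?_
        rw [abs_mul, abs_of_nonneg (Finset.prod_nonneg fun l _ => pow_nonneg hB0 _)]
      -- the constants
      set Cu : Fin v → ℝ := fun k => ∑' r : Fin v → ℕ,
        |(1 / ((∏ l, Nat.factorial (r l) : ℕ) : ℝ))
          * mpd r (fun x => u x (t0 + n * h) k) (xc n)| * ∏ l, B ^ r l with hCudef
      set CG : Fin v → Fin d → ℝ := fun k j => ∑' r : Fin v → ℕ,
        |(1 / ((∏ l, Nat.factorial (r l) : ℕ) : ℝ))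
          * mpd r (fun x => G x (t0 + n * h) k j) (xc n)| * ∏ l, B ^ r l with hCGdef
      have hprodnn : ∀ r : Fin v → ℕ, (0:ℝ) ≤ ∏ l, B ^ r l :=
        fun r => Finset.prod_nonneg fun l _ => pow_nonneg hB0 _
      have hCu0 : ∀ k, 0 ≤ Cu k := by
        intro k
        refine tsum_nonneg fun r => mul_nonneg (abs_nonneg _) (hprodnn r)
      have hCG0 : ∀ k j, 0 ≤ CG k j := by
        intro k j
        refine tsum_nonneg fun r => mul_nonneg (abs_nonneg _) (hprodnn r)
      refine ⟨B + |h| * ∑ k, Cu k + ∑ k, ∑ j, CG k j * |A (n + 1) j|, ?_, ?_, ?_⟩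
      · have h1 : 0 ≤ ∑ k, Cu k := Finset.sum_nonneg fun k _ => hCu0 k
        have h2 : (0:ℝ) ≤ ∑ k, ∑ j, CG k j * |A (n + 1) j| :=
          Finset.sum_nonneg fun k _ => Finset.sum_nonneg fun j _ =>
            mul_nonneg (hCG0 k j) (abs_nonneg _)
        have h3 : (0:ℝ) ≤ |h| * ∑ k, Cu k := mul_nonneg (abs_nonneg _) h1
        linarith
      · -- the uniform bound
        intro N hN ω k
        rw [hDWt N hN n ω k]
        have hy : ∀ l, |DWt N n ω l| ≤ B := fun l => hBbd N hN ω l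
        have hSu : |∑ r ∈ (midx v N).filter (fun r => 1 ≤ ∑ l, r l ∧ ∑ l, r l ≤ N),
            (1 / ((∏ l, Nat.factorial (r l) : ℕ) : ℝ))
              * mpd r (fun x => u x (t0 + n * h) k) (xc n)
              * ∏ l, (DWt N n ω l) ^ (r l)| ≤ Cu k :=
          abs_sum_le_tsum_coeff _ B hB0 (hUabs k) _ hy _
        have hSG : |∑ r ∈ (midx v N).filter (fun r => (∑ l, r l) + 1 ≤ N),
            ∑ j : Fin d,
              (1 / ((∏ l, Nat.factorial (r l) : ℕ) : ℝ))
                * mpd r (fun x => G x (t0 + n * h) k j) (xc n)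
                * dW (n + 1) ω j * ∏ l, (DWt N n ω l) ^ (r l)|
            ≤ ∑ j, CG k j * |A (n + 1) j| := by
          have hre : ∑ r ∈ (midx v N).filter (fun r => (∑ l, r l) + 1 ≤ N),
              ∑ j : Fin d,
                (1 / ((∏ l, Nat.factorial (r l) : ℕ) : ℝ))
                  * mpd r (fun x => G x (t0 + n * h) k j) (xc n)
                  * dW (n + 1) ω j * ∏ l, (DWt N n ω l) ^ (r l)
              = ∑ j : Fin d, (∑ r ∈ (midx v N).filter (fun r => (∑ l, r l) + 1 ≤ N),
                  (1 / ((∏ l, Nat.factorial (r l) : ℕ) : ℝ))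
                    * mpd r (fun x => G x (t0 + n * h) k j) (xc n)
                    * ∏ l, (DWt N n ω l) ^ (r l)) * dW (n + 1) ω j := by
            rw [Finset.sum_comm]
            refine Finset.sum_congr rfl fun j _ => ?_
            rw [Finset.sum_mul]
            exact Finset.sum_congr rfl fun r _ => by ring
          rw [hre]
          calc |∑ j : Fin d, (∑ r ∈ (midx v N).filter (fun r => (∑ l, r l) + 1 ≤ N),
                  (1 / ((∏ l, Nat.factorial (r l) : ℕ) : ℝ))
                    * mpd r (fun x => G x (t0 + n * h) k j) (xc n)
                    * ∏ l, (DWt N n ω l) ^ (r l)) * dW (n + 1) ω j|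
              ≤ ∑ j : Fin d, |(∑ r ∈ (midx v N).filter (fun r => (∑ l, r l) + 1 ≤ N),
                  (1 / ((∏ l, Nat.factorial (r l) : ℕ) : ℝ))
                    * mpd r (fun x => G x (t0 + n * h) k j) (xc n)
                    * ∏ l, (DWt N n ω l) ^ (r l)) * dW (n + 1) ω j| :=
                Finset.abs_sum_le_sum_abs _ _
            _ ≤ ∑ j, CG k j * |A (n + 1) j| := by
                refine Finset.sum_le_sum fun j _ => ?_
                rw [abs_mul]
                refine mul_le_mul (abs_sum_le_tsum_coeff _ B hB0 (hGabs k j) _ hy _)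
                  ((hA (n + 1) j ω).trans (le_abs_self _)) (abs_nonneg _) (hCG0 k j)
        calc |DWt N n ω k
              + h * ∑ r ∈ (midx v N).filter (fun r => 1 ≤ ∑ l, r l ∧ ∑ l, r l ≤ N),
                  (1 / ((∏ l, Nat.factorial (r l) : ℕ) : ℝ))
                    * mpd r (fun x => u x (t0 + n * h) k) (xc n)
                    * ∏ l, (DWt N n ω l) ^ (r l)
              + ∑ r ∈ (midx v N).filter (fun r => (∑ l, r l) + 1 ≤ N),
                  ∑ j : Fin d,
                    (1 / ((∏ l, Nat.factorial (r l) : ℕ) : ℝ))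
                      * mpd r (fun x => G x (t0 + n * h) k j) (xc n)
                      * dW (n + 1) ω j * ∏ l, (DWt N n ω l) ^ (r l)|
            ≤ |DWt N n ω k|
              + |h * ∑ r ∈ (midx v N).filter (fun r => 1 ≤ ∑ l, r l ∧ ∑ l, r l ≤ N),
                  (1 / ((∏ l, Nat.factorial (r l) : ℕ) : ℝ))
                    * mpd r (fun x => u x (t0 + n * h) k) (xc n)
                    * ∏ l, (DWt N n ω l) ^ (r l)|
              + |∑ r ∈ (midx v N).filter (fun r => (∑ l, r l) + 1 ≤ N),
                  ∑ j : Fin d,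
                    (1 / ((∏ l, Nat.factorial (r l) : ℕ) : ℝ))
                      * mpd r (fun x => G x (t0 + n * h) k j) (xc n)
                      * dW (n + 1) ω j * ∏ l, (DWt N n ω l) ^ (r l)| :=
              (abs_add_le _ _).trans (add_le_add_left (abs_add_le _ _) _)
          _ ≤ B + |h| * Cu k + ∑ j, CG k j * |A (n + 1) j| := by
              rw [abs_mul]
              exact add_le_add (add_le_add (hy k)
                (mul_le_mul_of_nonneg_left hSu (abs_nonneg _))) hSG
          _ ≤ B + |h| * ∑ k', Cu k' + ∑ k', ∑ j, CG k' j * |A (n + 1) j| := by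
              refine add_le_add (add_le_add_right (mul_le_mul_of_nonneg_left ?_
                (abs_nonneg _)) _) ?_
              · exact Finset.single_le_sum (fun k' _ => hCu0 k') (Finset.mem_univ k)
              · exact Finset.single_le_sum
                  (f := fun k' => ∑ j, CG k' j * |A (n + 1) j|)
                  (fun k' _ => Finset.sum_nonneg fun j _ =>
                    mul_nonneg (hCG0 k' j) (abs_nonneg _)) (Finset.mem_univ k)
      · -- the pointwise convergence
        intro ω k
        have hbd : ∀ᶠ N in atTop, ∀ l, |DWt N n ω l| ≤ B := by
          filter_upwards [eventually_ge_atTop 1] with N hN l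
          exact hBbd N hN ω l
        -- convergence of the u-part
        have hSulim : Tendsto (fun N =>
            ∑ r ∈ (midx v N).filter (fun r => 1 ≤ ∑ l, r l ∧ ∑ l, r l ≤ N),
              (1 / ((∏ l, Nat.factorial (r l) : ℕ) : ℝ))
                * mpd r (fun x => u x (t0 + n * h) k) (xc n)
                * ∏ l, (DWt N n ω l) ^ (r l)) atTop
            (nhds (u (xc n + DW n ω) (t0 + n * h) k - u (xc n) (t0 + n * h) k)) := by
          have hkey := key_tendsto_s7
            (fun r : Fin v → ℕ => (1 / ((∏ l, Nat.factorial (r l) : ℕ) : ℝ))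
              * mpd r (fun x => u x (t0 + n * h) k) (xc n)) B hB0
            (by simpa using (hUanalytic n k (xc n) (fun _ => B)).summable)
            (fun N => DWt N n ω) (DW n ω) (fun l => hconv ω l) hbd
            (fun N => (midx v N).filter (fun r => 1 ≤ ∑ l, r l ∧ ∑ l, r l ≤ N))
            (fun r => 1 ≤ ∑ l, r l)
            (by
              intro r hpr
              filter_upwards [eventually_ge_atTop (∑ l, r l)] with N hNr
              rw [Finset.mem_filter]
              refine ⟨?_, hpr, hNr⟩
              rw [midx, Fintype.mem_piFinset]
              intro l
              rw [Finset.mem_range]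
              have : r l ≤ ∑ l', r l' :=
                Finset.single_le_sum (fun l' _ => Nat.zero_le _) (Finset.mem_univ l)
              omega)
            (fun N r hr => (Finset.mem_filter.mp hr).2.1)
          have hval : (∑' r : Fin v → ℕ, if 1 ≤ ∑ l, r l then
              (1 / ((∏ l, Nat.factorial (r l) : ℕ) : ℝ))
                * mpd r (fun x => u x (t0 + n * h) k) (xc n)
                * ∏ l, (DW n ω l) ^ (r l) else 0)
              = u (xc n + DW n ω) (t0 + n * h) k - u (xc n) (t0 + n * h) k := by
            have h2 := hUanalytic n k (xc n) (DW n ω)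
            have h3 : HasSum (fun r : Fin v → ℕ =>
                if r = 0 then u (xc n) (t0 + n * h) k else 0)
                (u (xc n) (t0 + n * h) k) := hasSum_ite_eq 0 _
            have h4 := h2.sub h3
            have h5 : (fun r : Fin v → ℕ => if 1 ≤ ∑ l, r l then
                (1 / ((∏ l, Nat.factorial (r l) : ℕ) : ℝ))
                  * mpd r (fun x => u x (t0 + n * h) k) (xc n)
                  * ∏ l, (DW n ω l) ^ (r l) else 0)
                = fun r : Fin v → ℕ =>
                  ((1 / ((∏ l, Nat.factorial (r l) : ℕ) : ℝ))
                    * mpd r (fun x => u x (t0 + n * h) k) (xc n)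
                    * ∏ l, (DW n ω l) ^ (r l))
                  - (if r = 0 then u (xc n) (t0 + n * h) k else 0) := by
              funext r
              by_cases hr : r = 0
              · subst hr
                rw [if_neg (by simp), if_pos rfl]
                rw [mpd_zero_s7 (0 : Fin v → ℕ) (fun l => rfl)]
                simp
              · have hr1 : 1 ≤ ∑ l, r l := by
                  by_contra hc
                  push_neg at hc
                  apply hr
                  funext l
                  have := Finset.sum_eq_zero_iff.mp (Nat.lt_one_iff.mp hc) l
                    (Finset.mem_univ l)
                  simpa using this
                rw [if_pos hr1, if_neg hr, sub_zero]
            rw [h5]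
            exact h4.tsum_eq
          rw [hval] at hkey
          exact hkey
        -- convergence of the G-part (rearranged)
        have hSGlim : Tendsto (fun N =>
            ∑ j : Fin d, (∑ r ∈ (midx v N).filter (fun r => (∑ l, r l) + 1 ≤ N),
                (1 / ((∏ l, Nat.factorial (r l) : ℕ) : ℝ))
                  * mpd r (fun x => G x (t0 + n * h) k j) (xc n)
                  * ∏ l, (DWt N n ω l) ^ (r l)) * dW (n + 1) ω j) atTop
            (nhds (∑ j, G (xc n + DW n ω) (t0 + n * h) k j * dW (n + 1) ω j)) := by
          refine tendsto_finset_sum _ fun j _ => ?_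
          have hkey := key_tendsto_s7
            (fun r : Fin v → ℕ => (1 / ((∏ l, Nat.factorial (r l) : ℕ) : ℝ))
              * mpd r (fun x => G x (t0 + n * h) k j) (xc n)) B hB0
            (by simpa using (hGanalytic n k j (xc n) (fun _ => B)).summable)
            (fun N => DWt N n ω) (DW n ω) (fun l => hconv ω l) hbd
            (fun N => (midx v N).filter (fun r => (∑ l, r l) + 1 ≤ N))
            (fun _ => True)
            (by
              intro r _
              filter_upwards [eventually_ge_atTop ((∑ l, r l) + 1)] with N hNr
              rw [Finset.mem_filter]
              refine ⟨?_, hNr⟩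
              rw [midx, Fintype.mem_piFinset]
              intro l
              rw [Finset.mem_range]
              have : r l ≤ ∑ l', r l' :=
                Finset.single_le_sum (fun l' _ => Nat.zero_le _) (Finset.mem_univ l)
              omega)
            (fun N r _ => trivial)
          simp only [if_true] at hkey
          have hval : (∑' r : Fin v → ℕ,
              (1 / ((∏ l, Nat.factorial (r l) : ℕ) : ℝ))
                * mpd r (fun x => G x (t0 + n * h) k j) (xc n)
                * ∏ l, (DW n ω l) ^ (r l))
              = G (xc n + DW n ω) (t0 + n * h) k j :=
            (hGanalytic n k j (xc n) (DW n ω)).tsum_eq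
          rw [hval] at hkey
          exact hkey.mul_const _
        -- assemble
        have hfull : Tendsto (fun N =>
            DWt N n ω k
            + h * ∑ r ∈ (midx v N).filter (fun r => 1 ≤ ∑ l, r l ∧ ∑ l, r l ≤ N),
                (1 / ((∏ l, Nat.factorial (r l) : ℕ) : ℝ))
                  * mpd r (fun x => u x (t0 + n * h) k) (xc n)
                  * ∏ l, (DWt N n ω l) ^ (r l)
            + ∑ j : Fin d, (∑ r ∈ (midx v N).filter (fun r => (∑ l, r l) + 1 ≤ N),
                (1 / ((∏ l, Nat.factorial (r l) : ℕ) : ℝ))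
                  * mpd r (fun x => G x (t0 + n * h) k j) (xc n)
                  * ∏ l, (DWt N n ω l) ^ (r l)) * dW (n + 1) ω j) atTop
            (nhds (DW (n + 1) ω k)) := by
          rw [hDWrec n ω k]
          exact ((hconv ω k).add (hSulim.const_mul h)).add hSGlim
        refine Tendsto.congr' ?_ hfull
        filter_upwards [eventually_ge_atTop 1] with N hN
        rw [hDWt N hN n ω k]
        congr 1
        rw [Finset.sum_comm]
        refine Finset.sum_congr rfl fun j _ => ?_
        rw [Finset.sum_mul]
        exact Finset.sum_congr rfl fun r _ => by ring
  -- conclusion by dominated convergence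
  intro n _ r
  obtain ⟨B, hB0, hBbd, hconv⟩ := main n
  refine tendsto_integral_filter_of_dominated_convergence (fun _ => ∏ k, B ^ r k)
    ?_ ?_ (integrable_const _) ?_
  · filter_upwards [eventually_ge_atTop 1] with N hN
    exact (Finset.measurable_prod _ fun k _ =>
      (measDWt N hN n k).pow_const _).aestronglyMeasurable
  · filter_upwards [eventually_ge_atTop 1] with N hN
    refine Filter.Eventually.of_forall fun ω => ?_
    rw [Real.norm_eq_abs, Finset.abs_prod]
    refine Finset.prod_le_prod (fun k _ => abs_nonneg _) fun k _ => ?_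
    rw [abs_pow]
    exact pow_le_pow_left₀ (abs_nonneg _) (hBbd N hN ω k) _
  · exact Filter.Eventually.of_forall fun ω =>
      tendsto_finset_prod _ fun k _ => (hconv ω k).pow (r k)
end
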